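/- Let f : ℝ^d → ℝ be convex L-smooth with minimizer x_*, δ > 0, x₀ ∈ ℝ^d, f_δ(x) = f(x) + (δ/2)‖x − x₀‖². Suppose x_{t+1} satisfies f_δ(x_{t+1}) − f_δ(x) ≤ q^t (f(x₀) − f(x)) for all x where q = 1 − √(δ/(L+δ)), and additionally ‖x_{t+1} − x₀‖ ≤ √2‖x₀ − x_*‖. Then ‖∇f(x_{t+1})‖ ≤ √(L(L+δ)) · q^{t/2} · ‖x₀ − x_*‖ + √2 δ ‖x₀ − x_*‖. -/

import Mathlib

open scoped RealInnerProductSpace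

-- descent lemma
lemma descent_aux {E : Type*} [NormedAddCommGroup E] [InnerProductSpace ℝ E] [CompleteSpace E]
    (h : E → ℝ) (h' : E → E) (M : ℝ)
    (hg : ∀ x, HasGradientAt h (h' x) x)
    (hl : ∀ x y, ‖h' x - h' y‖ ≤ M * ‖x - y‖) (y z : E) :
    h z ≤ h y + ⟪h' y, z - y⟫ + M / 2 * ‖z - y‖ ^ 2 := by
  set c : ℝ → E := fun s => y + s • (z - y) with hc_def
  have hc : ∀ s : ℝ, HasDerivAt c (z - y) s := by
    intro s
    exact (((hasDerivAt_id s).smul_const (z - y)).const_add y).congr_deriv (one_smul _ _)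
  have hφ : ∀ s : ℝ, HasDerivAt (fun s => h (c s)) ⟪h' (c s), z - y⟫ s := by
    intro s
    have H := hasGradientAt_iff_hasFDerivAt.mp (hg (c s))
    have := H.comp_hasDerivAt s (hc s)
    exact this
  set ψ : ℝ → ℝ := fun s => h (c s) - s * ⟪h' y, z - y⟫ - M / 2 * s ^ 2 * ‖z - y‖ ^ 2 with hψdef
  have hψ : ∀ s : ℝ, HasDerivAt ψ
      (⟪h' (c s), z - y⟫ - ⟪h' y, z - y⟫ - M * s * ‖z - y‖ ^ 2) s := by
    intro s
    have h2 : HasDerivAt (fun s : ℝ => s * ⟪h' y, z - y⟫) ⟪h' y, z - y⟫ s := by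
      simpa using (hasDerivAt_id s).mul_const ⟪h' y, z - y⟫
    have h3 : HasDerivAt (fun s : ℝ => M / 2 * s ^ 2 * ‖z - y‖ ^ 2)
        (M * s * ‖z - y‖ ^ 2) s := by
      have := ((hasDerivAt_pow 2 s).const_mul (M / 2)).mul_const (‖z - y‖ ^ 2)
      refine this.congr_deriv ?_
      ring
    exact ((hφ s).sub h2).sub h3
  have hmono : AntitoneOn ψ (Set.Icc (0:ℝ) 1) := by
    apply antitoneOn_of_deriv_nonpos (convex_Icc 0 1)
    · exact (Differentiable.continuous (fun s => (hψ s).differentiableAt)).continuousOn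
    · exact fun s _ => ((hψ s).differentiableAt).differentiableWithinAt
    · intro s hs
      rw [interior_Icc] at hs
      rw [(hψ s).deriv]
      have h1 : ⟪h' (c s), z - y⟫ - ⟪h' y, z - y⟫ = ⟪h' (c s) - h' y, z - y⟫ := by
        rw [inner_sub_left]
      rw [h1]
      have h2 : ⟪h' (c s) - h' y, z - y⟫ ≤ ‖h' (c s) - h' y‖ * ‖z - y‖ :=
        real_inner_le_norm _ _
      have h3 : ‖h' (c s) - h' y‖ ≤ M * ‖c s - y‖ := hl _ _
      have h4 : ‖c s - y‖ = s * ‖z - y‖ := by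
        simp [hc_def, norm_smul, abs_of_pos hs.1]
      rw [h4] at h3
      have h5 : ‖h' (c s) - h' y‖ * ‖z - y‖ ≤ (M * (s * ‖z - y‖)) * ‖z - y‖ :=
        mul_le_mul_of_nonneg_right h3 (norm_nonneg _)
      nlinarith [h2, h5]
  have := hmono (Set.mem_Icc.mpr ⟨le_refl 0, zero_le_one⟩)
    (Set.mem_Icc.mpr ⟨zero_le_one, le_refl 1⟩) zero_le_one
  have hc0 : c 0 = y := by simp [hc_def]
  have hc1 : c 1 = z := by simp [hc_def]
  simp only [hψdef, hc0, hc1] at this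
  nlinarith [this]

-- gradient of the regularizer
lemma reg_grad {E : Type*} [NormedAddCommGroup E] [InnerProductSpace ℝ E] [CompleteSpace E]
    (δ : ℝ) (x0 x : E) :
    HasGradientAt (fun y => δ / 2 * ‖y - x0‖ ^ 2) (δ • (x - x0)) x := by
  rw [hasGradientAt_iff_hasFDerivAt]
  have h1 : HasFDerivAt (fun y : E => y - x0) (ContinuousLinearMap.id ℝ E) x :=
    (hasFDerivAt_id x).sub_const x0
  have h2 := (h1.inner ℝ h1).const_mul (δ / 2)
  have heq : (fun y : E => δ / 2 * ⟪y - x0, y - x0⟫) = fun y => δ / 2 * ‖y - x0‖ ^ 2 := by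
    funext y
    rw [real_inner_self_eq_norm_sq]
  rw [heq] at h2
  refine h2.congr_fderiv ?_
  ext v
  simp [InnerProductSpace.toDual_apply_apply, fderivInnerCLM_apply, real_inner_smul_left, inner_sub_left,
    inner_sub_right, real_inner_comm (x - x0) v]
  ring

theorem regularized_stage_grad_norm_bound {d : ℕ} (L δ : ℝ) (hL : 0 < L) (hδ : 0 < δ)
    (f : EuclideanSpace ℝ (Fin d) → ℝ)
    (f' : EuclideanSpace ℝ (Fin d) → EuclideanSpace ℝ (Fin d))
    (hconv : ConvexOn ℝ Set.univ f)
    (hgrad : ∀ x, HasGradientAt f (f' x) x)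
    (hlip : ∀ x y, ‖f' x - f' y‖ ≤ L * ‖x - y‖)
    (xstar : EuclideanSpace ℝ (Fin d)) (hstar : ∀ y, f xstar ≤ f y)
    (x0 xt1 : EuclideanSpace ℝ (Fin d)) (t : ℕ)
    (hyp : ∀ x, (f xt1 + δ / 2 * ‖xt1 - x0‖ ^ 2) - (f x + δ / 2 * ‖x - x0‖ ^ 2)
        ≤ (1 - Real.sqrt (δ / (L + δ))) ^ t * (f x0 - f x))
    (hclose : ‖xt1 - x0‖ ≤ Real.sqrt 2 * ‖x0 - xstar‖) :
    ‖f' xt1‖ ≤ Real.sqrt (L * (L + δ))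
        * (1 - Real.sqrt (δ / (L + δ))) ^ ((t : ℝ) / 2) * ‖x0 - xstar‖
      + Real.sqrt 2 * δ * ‖x0 - xstar‖ := by
  have hLδ : 0 < L + δ := by linarith
  set q : ℝ := 1 - Real.sqrt (δ / (L + δ)) with hq_def
  have hq0 : 0 ≤ q := by
    have h1 : Real.sqrt (δ / (L + δ)) ≤ 1 := by
      rw [show (1:ℝ) = Real.sqrt 1 by simp]
      apply Real.sqrt_le_sqrt
      rw [div_le_one hLδ]
      linarith
    rw [hq_def]
    linarith
  -- gradient at minimizer is zero
  have hmin : f' xstar = 0 := by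
    have h0 : IsLocalMin f xstar := Filter.Eventually.of_forall hstar
    have h1 := h0.hasFDerivAt_eq_zero (hasGradientAt_iff_hasFDerivAt.mp (hgrad xstar))
    have h2 : (InnerProductSpace.toDual ℝ (EuclideanSpace ℝ (Fin d))) (f' xstar)
        = (InnerProductSpace.toDual ℝ (EuclideanSpace ℝ (Fin d))) 0 := by
      rw [h1, map_zero]
    exact (InnerProductSpace.toDual ℝ _).injective h2
  -- smoothness bound at x0
  have hsmooth : f x0 - f xstar ≤ L / 2 * ‖x0 - xstar‖ ^ 2 := by
    have := descent_aux f f' L hgrad hlip xstar x0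
    rw [hmin, inner_zero_left] at this
    linarith
  -- the regularized function
  set F : EuclideanSpace ℝ (Fin d) → ℝ := fun x => f x + δ / 2 * ‖x - x0‖ ^ 2 with hF_def
  set F' : EuclideanSpace ℝ (Fin d) → EuclideanSpace ℝ (Fin d) :=
    fun x => f' x + δ • (x - x0) with hF'_def
  have hFgrad : ∀ x, HasGradientAt F (F' x) x := by
    intro x
    rw [hasGradientAt_iff_hasFDerivAt]
    have h1 := (hasGradientAt_iff_hasFDerivAt.mp (hgrad x)).add
      (hasGradientAt_iff_hasFDerivAt.mp (reg_grad δ x0 x))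
    refine h1.congr_fderiv ?_
    exact (map_add (InnerProductSpace.toDual ℝ _) _ _).symm
  have hFlip : ∀ x y, ‖F' x - F' y‖ ≤ (L + δ) * ‖x - y‖ := by
    intro x y
    have h1 : F' x - F' y = (f' x - f' y) + δ • (x - y) := by
      simp only [hF'_def, smul_sub]
      abel
    rw [h1]
    have h2 : ‖δ • (x - y)‖ = δ * ‖x - y‖ := by
      rw [norm_smul, Real.norm_eq_abs, abs_of_pos hδ]
    calc ‖(f' x - f' y) + δ • (x - y)‖ ≤ ‖f' x - f' y‖ + ‖δ • (x - y)‖ := norm_add_le _ _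
      _ ≤ L * ‖x - y‖ + δ * ‖x - y‖ := by rw [h2]; exact add_le_add_left (hlip x y) _
      _ = (L + δ) * ‖x - y‖ := by ring
  set g : EuclideanSpace ℝ (Fin d) := F' xt1 with hg_def
  set z : EuclideanSpace ℝ (Fin d) := xt1 - (1 / (L + δ)) • g with hz_def
  have hzsub : z - xt1 = -((1 / (L + δ)) • g) := by rw [hz_def]; abel
  have e1 : ⟪g, z - xt1⟫ = -(‖g‖ ^ 2 / (L + δ)) := by
    rw [hzsub, inner_neg_right, real_inner_smul_right, real_inner_self_eq_norm_sq]
    ring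
  have e2 : ‖z - xt1‖ ^ 2 = ‖g‖ ^ 2 / (L + δ) ^ 2 := by
    rw [hzsub, norm_neg, norm_smul, Real.norm_eq_abs, mul_pow, sq_abs]
    field_simp
  have key1 : ‖g‖ ^ 2 / (2 * (L + δ)) ≤ F xt1 - F z := by
    have hd := descent_aux F F' (L + δ) hFgrad hFlip xt1 z
    rw [e1, e2] at hd
    have harith : F xt1 + -(‖g‖ ^ 2 / (L + δ)) + (L + δ) / 2 * (‖g‖ ^ 2 / (L + δ) ^ 2)
        = F xt1 - ‖g‖ ^ 2 / (2 * (L + δ)) := by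
      field_simp
      ring
    rw [harith] at hd
    linarith
  have key2 : F xt1 - F z ≤ q ^ t * (f x0 - f z) := hyp z
  have key3 : q ^ t * (f x0 - f z) ≤ q ^ t * (L / 2 * ‖x0 - xstar‖ ^ 2) := by
    apply mul_le_mul_of_nonneg_left _ (pow_nonneg hq0 t)
    have := hstar z
    linarith
  have hgsq : ‖g‖ ^ 2 ≤ L * (L + δ) * q ^ t * ‖x0 - xstar‖ ^ 2 := by
    have h1 : ‖g‖ ^ 2 / (2 * (L + δ)) ≤ q ^ t * (L / 2 * ‖x0 - xstar‖ ^ 2) :=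
      le_trans key1 (le_trans key2 key3)
    rw [div_le_iff₀ (by linarith : (0:ℝ) < 2 * (L + δ))] at h1
    nlinarith [h1]
  have hgn : ‖g‖ ≤ Real.sqrt (L * (L + δ)) * q ^ ((t : ℝ) / 2) * ‖x0 - xstar‖ := by
    have h1 : ‖g‖ = Real.sqrt (‖g‖ ^ 2) := (Real.sqrt_sq (norm_nonneg g)).symm
    rw [h1]
    have h2 := Real.sqrt_le_sqrt hgsq
    apply le_trans h2
    rw [show L * (L + δ) * q ^ t * ‖x0 - xstar‖ ^ 2
        = (L * (L + δ)) * (q ^ t * ‖x0 - xstar‖ ^ 2) by ring]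
    rw [Real.sqrt_mul (by positivity) , Real.sqrt_mul (pow_nonneg hq0 t),
      Real.sqrt_sq (norm_nonneg _)]
    have h3 : Real.sqrt (q ^ t) = q ^ ((t : ℝ) / 2) := by
      rw [Real.sqrt_eq_rpow, ← Real.rpow_natCast q t, ← Real.rpow_mul hq0, mul_one_div]
    rw [h3, mul_assoc]
  have hfinal : f' xt1 = g - δ • (xt1 - x0) := by
    rw [hg_def, hF'_def]
    module
  rw [hfinal]
  have h5 : ‖g - δ • (xt1 - x0)‖ ≤ ‖g‖ + δ * ‖xt1 - x0‖ := by
    calc ‖g - δ • (xt1 - x0)‖ ≤ ‖g‖ + ‖δ • (xt1 - x0)‖ := norm_sub_le _ _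
      _ = ‖g‖ + δ * ‖xt1 - x0‖ := by
        rw [norm_smul, Real.norm_eq_abs, abs_of_pos hδ]
  have h6 : δ * ‖xt1 - x0‖ ≤ Real.sqrt 2 * δ * ‖x0 - xstar‖ := by
    calc δ * ‖xt1 - x0‖ ≤ δ * (Real.sqrt 2 * ‖x0 - xstar‖) :=
      mul_le_mul_of_nonneg_left hclose hδ.le
      _ = Real.sqrt 2 * δ * ‖x0 - xstar‖ := by ring
  linarith
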